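/- Let f, g be nonnegative functions in L^1(ℝ^d) with equal L^1 norms. If g is radially symmetric and non-increasing (rearranged), and the symmetric decreasing rearrangement f^# of f is less concentrated than g (i.e. ∫_{B_R(0)} f^# dx ≤ ∫_{B_R(0)} g dx for all R > 0), then the second moment of f is at least the second moment of g: ∫ f(x)|x|² dx ≥ ∫ g(x)|x|² dx. -/

import Mathlib

open MeasureTheory ENNReal

lemma sq_lintegral_aux {a : ℝ} (ha : 0 ≤ a) :
    ∫⁻ r in Set.Ioi (0:ℝ), (Set.Iic a).indicator (fun r => ENNReal.ofReal (2*r)) r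
      = ENNReal.ofReal (a^2) := by
  rw [lintegral_indicator measurableSet_Iic, Measure.restrict_restrict measurableSet_Iic,
    Set.Iic_inter_Ioi]
  rw [← ofReal_integral_eq_lintegral_ofReal]
  · congr 1
    rw [← intervalIntegral.integral_of_le ha, intervalIntegral.integral_const_mul,
      integral_id]
    ring
  · exact (continuous_const.mul continuous_id).integrableOn_Ioc
  · filter_upwards [ae_restrict_mem measurableSet_Ioc] with r hr
    have : (0:ℝ) < r := hr.1
    positivity

lemma radial_measurable {d : ℕ} {F : ℝ → ℝ} (hF : AntitoneOn F (Set.Ici 0))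
    {h : EuclideanSpace ℝ (Fin d) → ℝ} (hh : ∀ x, h x = F ‖x‖) : Measurable h := by
  have hanti : Antitone (fun r : ℝ => F (max r 0)) := fun r s hrs =>
    hF (Set.mem_Ici.2 (le_max_right r 0)) (Set.mem_Ici.2 (le_max_right s 0))
      (max_le_max hrs le_rfl)
  have heq : h = (fun r : ℝ => F (max r 0)) ∘ (fun x : EuclideanSpace ℝ (Fin d) => ‖x‖) := by
    funext x
    simp [hh x, max_eq_left (norm_nonneg x)]
  rw [heq]
  exact hanti.measurable.comp measurable_norm

/-- The rearrangement is more concentrated on balls than the original function. -/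
lemma ball_lintegral_le_rearrangement {d : ℕ} {f fs : EuclideanSpace ℝ (Fin d) → ℝ}
    (hf0 : ∀ x, 0 ≤ f x) (hfs0 : ∀ x, 0 ≤ fs x)
    (hfm : AEMeasurable f volume) (hfsm : Measurable fs)
    {F : ℝ → ℝ} (hF : AntitoneOn F (Set.Ici 0)) (hfsF : ∀ x, fs x = F ‖x‖)
    (hequi : ∀ t : ℝ, 0 < t → volume {x | t < f x} = volume {x | t < fs x})
    (R : ℝ) :
    ∫⁻ x in Metric.ball (0 : EuclideanSpace ℝ (Fin d)) R, ENNReal.ofReal (f x) ≤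
      ∫⁻ x in Metric.ball (0 : EuclideanSpace ℝ (Fin d)) R, ENNReal.ofReal (fs x) := by
  set B := Metric.ball (0 : EuclideanSpace ℝ (Fin d)) R with hB
  have hBm : MeasurableSet B := measurableSet_ball
  rw [lintegral_eq_lintegral_meas_lt _ (ae_of_all _ hf0) hfm.restrict,
    lintegral_eq_lintegral_meas_lt _ (ae_of_all _ hfs0) hfsm.aemeasurable.restrict]
  refine lintegral_mono_ae ?_
  filter_upwards [ae_restrict_mem measurableSet_Ioi] with t ht
  rw [Measure.restrict_apply' hBm, Measure.restrict_apply' hBm]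
  -- dichotomy: either B ⊆ {fs > t} or {fs > t} ⊆ B
  by_cases hcase : ∃ x ∈ {x | t < fs x}, R ≤ ‖x‖
  · obtain ⟨x, hx, hxR⟩ := hcase
    have hsub : B ⊆ {x | t < fs x} := by
      intro y hy
      have hy' : ‖y‖ < R := by simpa [hB] using hy
      have : F ‖x‖ ≤ F ‖y‖ :=
        hF (norm_nonneg y) (norm_nonneg x) (le_trans hy'.le hxR)
      have := lt_of_lt_of_le (by simpa [hfsF x] using hx) this
      simpa [hfsF y] using this
    calc volume ({x | t < f x} ∩ B) ≤ volume B := measure_mono Set.inter_subset_right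
      _ = volume ({x | t < fs x} ∩ B) := by rw [Set.inter_eq_right.2 hsub]
  · push_neg at hcase
    have hsub : {x | t < fs x} ⊆ B := by
      intro y hy
      have := hcase y hy
      simpa [hB, mem_ball_zero_iff] using this
    calc volume ({x | t < f x} ∩ B) ≤ volume {x | t < f x} :=
        measure_mono Set.inter_subset_left
      _ = volume {x | t < fs x} := hequi t ht
      _ = volume ({x | t < fs x} ∩ B) := by rw [Set.inter_eq_left.2 hsub]

lemma compl_lintegral_mono {α : Type*} [MeasurableSpace α] {μ : Measure α} {s : Set α}
    (hs : MeasurableSet s) {a b : α → ℝ≥0∞}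
    (hsab : ∫⁻ x in s, a x ∂μ ≤ ∫⁻ x in s, b x ∂μ)
    (htot : ∫⁻ x, a x ∂μ = ∫⁻ x, b x ∂μ) (hfin : ∫⁻ x, a x ∂μ ≠ ⊤) :
    ∫⁻ x in sᶜ, b x ∂μ ≤ ∫⁻ x in sᶜ, a x ∂μ := by
  have ha := lintegral_add_compl (μ := μ) a hs
  have hb := lintegral_add_compl (μ := μ) b hs
  have hfin' : ∫⁻ x in s, a x ∂μ ≠ ⊤ := by
    refine ne_top_of_le_ne_top hfin ?_
    exact ha ▸ le_self_add
  rw [← ENNReal.add_le_add_iff_right hfin']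
  calc ∫⁻ x in sᶜ, b x ∂μ + ∫⁻ x in s, a x ∂μ
      ≤ ∫⁻ x in sᶜ, b x ∂μ + ∫⁻ x in s, b x ∂μ := by gcongr
    _ = ∫⁻ x, b x ∂μ := by rw [add_comm]; exact hb
    _ = ∫⁻ x, a x ∂μ := htot.symm
    _ = ∫⁻ x in sᶜ, a x ∂μ + ∫⁻ x in s, a x ∂μ := by rw [add_comm]; exact ha.symm

lemma moment_eq_lintegral {d : ℕ} {h : EuclideanSpace ℝ (Fin d) → ℝ}
    (h0 : ∀ x, 0 ≤ h x) (hm : AEMeasurable h volume) :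
    ∫⁻ x, ENNReal.ofReal (h x * ‖x‖ ^ 2)
      = ∫⁻ r in Set.Ioi (0:ℝ), ENNReal.ofReal (2*r) *
          ∫⁻ x in (Metric.ball (0 : EuclideanSpace ℝ (Fin d)) r)ᶜ, ENNReal.ofReal (h x) := by
  have step1 : ∀ x : EuclideanSpace ℝ (Fin d), ENNReal.ofReal (h x * ‖x‖ ^ 2)
      = ∫⁻ r in Set.Ioi (0:ℝ),
          ENNReal.ofReal (h x) * (Set.Iic ‖x‖).indicator (fun r => ENNReal.ofReal (2*r)) r := by
    intro x
    rw [lintegral_const_mul' _ _ ofReal_ne_top, sq_lintegral_aux (norm_nonneg x),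
      ← ENNReal.ofReal_mul (h0 x)]
  simp_rw [step1]
  have hmeas : AEMeasurable
      (Function.uncurry fun (x : EuclideanSpace ℝ (Fin d)) (r : ℝ) =>
        ENNReal.ofReal (h x) * (Set.Iic ‖x‖).indicator (fun r => ENNReal.ofReal (2*r)) r)
      (volume.prod (volume.restrict (Set.Ioi (0:ℝ)))) := by
    have heq : (Function.uncurry fun (x : EuclideanSpace ℝ (Fin d)) (r : ℝ) =>
        ENNReal.ofReal (h x) * (Set.Iic ‖x‖).indicator (fun r => ENNReal.ofReal (2*r)) r)
        = fun p : EuclideanSpace ℝ (Fin d) × ℝ =>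
            ENNReal.ofReal (h p.1) *
              ({q : EuclideanSpace ℝ (Fin d) × ℝ | q.2 ≤ ‖q.1‖}.indicator
                (fun q => ENNReal.ofReal (2*q.2)) p) := by
      funext p
      simp only [Function.uncurry, Set.indicator, Set.mem_Iic, Set.mem_setOf_eq]
    rw [heq]
    refine AEMeasurable.mul (hm.ennreal_ofReal.comp_fst) ?_
    refine Measurable.aemeasurable ?_
    refine Measurable.indicator ?_ ?_
    · exact (measurable_snd.const_mul 2).ennreal_ofReal
    · exact measurableSet_le measurable_snd measurable_fst.norm
  rw [lintegral_lintegral_swap hmeas]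
  refine setLIntegral_congr_fun measurableSet_Ioi (fun r hr => ?_)
  have hind : ∀ x : EuclideanSpace ℝ (Fin d),
      ENNReal.ofReal (h x) * (Set.Iic ‖x‖).indicator (fun r => ENNReal.ofReal (2*r)) r
        = ((Metric.ball (0 : EuclideanSpace ℝ (Fin d)) r)ᶜ).indicator
            (fun x => ENNReal.ofReal (2*r) * ENNReal.ofReal (h x)) x := by
    intro x
    simp only [Set.indicator, Set.mem_Iic, Set.mem_compl_iff, Metric.mem_ball,
      dist_zero_right, not_lt]
    by_cases hx : r ≤ ‖x‖ <;> simp [hx, mul_comm]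
  simp_rw [hind]
  rw [lintegral_indicator (measurableSet_ball.compl),
    lintegral_const_mul' _ _ ofReal_ne_top]

/-- If `f, g ∈ L¹₊(ℝᵈ)` have equal masses, `g` is rearranged (radially symmetric
non-increasing), and the Schwarz rearrangement `fsharp` of `f` (equidistributed with `f`)
is less concentrated than `g`, then the second moment of `f` is at least that of `g`. -/
theorem second_moment_ge_of_rearrangement_less_concentrated
    (d : ℕ) (f g fsharp : EuclideanSpace ℝ (Fin d) → ℝ)
    (hf0 : ∀ x, 0 ≤ f x) (hg0 : ∀ x, 0 ≤ g x) (hfs0 : ∀ x, 0 ≤ fsharp x)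
    (hfi : Integrable f) (hgi : Integrable g)
    (hmass : ∫ x, f x = ∫ x, g x)
    -- g is rearranged: radially symmetric with non-increasing radial profile
    (hg_rad : ∃ G : ℝ → ℝ, AntitoneOn G (Set.Ici 0) ∧ ∀ x, g x = G ‖x‖)
    -- fsharp is rearranged
    (hfs_rad : ∃ F : ℝ → ℝ, AntitoneOn F (Set.Ici 0) ∧ ∀ x, fsharp x = F ‖x‖)
    -- fsharp is equidistributed with f
    (hequi : ∀ t : ℝ, 0 < t →
      volume {x | t < f x} = volume {x | t < fsharp x})
    -- fsharp ≺ g : fsharp is less concentrated than g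
    (hconc : ∀ R : ℝ, 0 < R →
      ∫⁻ x in Metric.ball (0 : EuclideanSpace ℝ (Fin d)) R, ENNReal.ofReal (fsharp x) ≤
      ∫⁻ x in Metric.ball (0 : EuclideanSpace ℝ (Fin d)) R, ENNReal.ofReal (g x)) :
    ∫⁻ x, ENNReal.ofReal (g x * ‖x‖ ^ 2) ≤ ∫⁻ x, ENNReal.ofReal (f x * ‖x‖ ^ 2) := by
  obtain ⟨Fr, hFr, hfsF⟩ := hfs_rad
  have hfs_meas : Measurable fsharp := radial_measurable hFr hfsF
  have hTf : ∫⁻ x, ENNReal.ofReal (f x) = ENNReal.ofReal (∫ x, f x) :=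
    (ofReal_integral_eq_lintegral_ofReal hfi (ae_of_all _ hf0)).symm
  have hTg : ∫⁻ x, ENNReal.ofReal (g x) = ENNReal.ofReal (∫ x, g x) :=
    (ofReal_integral_eq_lintegral_ofReal hgi (ae_of_all _ hg0)).symm
  have hTfs : ∫⁻ x, ENNReal.ofReal (fsharp x) = ∫⁻ x, ENNReal.ofReal (f x) := by
    rw [lintegral_eq_lintegral_meas_lt volume (ae_of_all _ hfs0) hfs_meas.aemeasurable,
      lintegral_eq_lintegral_meas_lt volume (ae_of_all _ hf0) hfi.aemeasurable]
    exact (setLIntegral_congr_fun measurableSet_Ioi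
      (fun t ht => hequi t ht)).symm
  have htot_fsg : ∫⁻ x, ENNReal.ofReal (fsharp x) = ∫⁻ x, ENNReal.ofReal (g x) := by
    rw [hTfs, hTf, hTg, hmass]
  have hfin_fs : ∫⁻ x, ENNReal.ofReal (fsharp x) ≠ ⊤ := by
    rw [hTfs, hTf]; exact ofReal_ne_top
  have hfin_f : ∫⁻ x, ENNReal.ofReal (f x) ≠ ⊤ := by
    rw [hTf]; exact ofReal_ne_top
  rw [moment_eq_lintegral hg0 hgi.aemeasurable, moment_eq_lintegral hf0 hfi.aemeasurable]
  refine lintegral_mono_ae ?_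
  filter_upwards [ae_restrict_mem measurableSet_Ioi] with r hr
  refine mul_le_mul_right ?_ _
  have h1 : ∫⁻ x in (Metric.ball (0 : EuclideanSpace ℝ (Fin d)) r)ᶜ, ENNReal.ofReal (g x) ≤
      ∫⁻ x in (Metric.ball (0 : EuclideanSpace ℝ (Fin d)) r)ᶜ, ENNReal.ofReal (fsharp x) :=
    compl_lintegral_mono measurableSet_ball (hconc r hr) htot_fsg hfin_fs
  have h2 : ∫⁻ x in (Metric.ball (0 : EuclideanSpace ℝ (Fin d)) r)ᶜ, ENNReal.ofReal (fsharp x) ≤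
      ∫⁻ x in (Metric.ball (0 : EuclideanSpace ℝ (Fin d)) r)ᶜ, ENNReal.ofReal (f x) :=
    compl_lintegral_mono measurableSet_ball
      (ball_lintegral_le_rearrangement hf0 hfs0 hfi.aemeasurable hfs_meas hFr hfsF hequi r)
      hTfs.symm hfin_f
  exact h1.trans h2
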